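/- Let γ > 0 with γ ≠ 1, ρ ∈ (-1, 1), and set η := γ / (γ + (1-γ)ρ²) (note γ + (1-γ)ρ² = γ(1-ρ²) + ρ² > 0). Let μ, σ, c, β : ℝ → ℝ be smooth with σ > 0, and set λ(y) := μ(y)/σ(y). Suppose ψ(t, y) is a smooth, strictly positive function on [0, T] × ℝ satisfying the linear PDE ∂_t ψ + (1/2) β(y)² ∂_y² ψ + ( c(y) + ((1-γ)/γ) ρ β(y) λ(y) ) ∂_y ψ + ((1-γ)/(ηγ)) (1/2) λ(y)² ψ = 0. Then V(t, y, w) := (w^{1-γ}/(1-γ)) ψ(t, y)^η satisfies ∂_w² V < 0 for w > 0 and solves the nonlinear HJB equation ∂_t V + (1/2) β(y)² ∂_y² V + c(y) ∂_y V - ( ρ β(y) ∂_y∂_w V + λ(y) ∂_w V )² / (2 ∂_w² V) = 0 on [0, T) × ℝ × (0, ∞). Moreover, if ψ(T, y) = 1 for all y then V(T, y, w) = w^{1-γ}/(1-γ). -/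

import Mathlib

noncomputable section

/-- Partial derivative in the time variable of `V(t, y, w)`. -/
def pT (f : ℝ → ℝ → ℝ → ℝ) : ℝ → ℝ → ℝ → ℝ :=
  fun t y w => deriv (fun s => f s y w) t

/-- Partial derivative in the volatility-factor variable of `V(t, y, w)`. -/
def pY (f : ℝ → ℝ → ℝ → ℝ) : ℝ → ℝ → ℝ → ℝ :=
  fun t y w => deriv (fun u => f t u w) y

/-- Partial derivative in the wealth variable of `V(t, y, w)`. -/
def pW (f : ℝ → ℝ → ℝ → ℝ) : ℝ → ℝ → ℝ → ℝ :=
  fun t y w => deriv (fun v => f t y v) w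

/-- Partial derivative in the time variable of `ψ(t, y)`. -/
def pT2 (f : ℝ → ℝ → ℝ) : ℝ → ℝ → ℝ := fun t y => deriv (fun s => f s y) t

/-- Partial derivative in the `y` variable of `ψ(t, y)`. -/
def pY2 (f : ℝ → ℝ → ℝ) : ℝ → ℝ → ℝ := fun t y => deriv (fun u => f t u) y

open Real Set Filter Topology

private lemma oneLeTop : (1 : WithTop ℕ∞) ≤ ((⊤:ℕ∞) : WithTop ℕ∞) := by exact_mod_cast le_top
private lemma topNeZero : ((⊤:ℕ∞) : WithTop ℕ∞) ≠ 0 := by simp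
private lemma addOneLeTop : ((⊤:ℕ∞) : WithTop ℕ∞) + 1 ≤ ((⊤:ℕ∞) : WithTop ℕ∞) := by
  exact_mod_cast le_top

private lemma dA (γ M w : ℝ) (h1γ : 1 - γ ≠ 0) (hw : 0 < w) :
    deriv (fun v : ℝ => v ^ (1 - γ) / (1 - γ) * M) w = w ^ (-γ) * M := by
  have h : HasDerivAt (fun v : ℝ => v ^ (1 - γ) / (1 - γ) * M)
      ((1 - γ) * w ^ (1 - γ - 1) / (1 - γ) * M) w :=
    ((Real.hasDerivAt_rpow_const (Or.inl hw.ne')).div_const (1 - γ)).mul_const M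
  rw [h.deriv, show (1:ℝ) - γ - 1 = -γ by ring]
  field_simp

private lemma dB (γ M w : ℝ) (hw : 0 < w) :
    deriv (fun v : ℝ => v ^ (-γ) * M) w = -(γ * w ^ (-γ - 1) * M) := by
  have h : HasDerivAt (fun v : ℝ => v ^ (-γ) * M) ((-γ) * w ^ (-γ - 1) * M) w :=
    (Real.hasDerivAt_rpow_const (Or.inl hw.ne')).mul_const M
  rw [h.deriv]; ring

private lemma dC (f : ℝ → ℝ) (hf : ContDiff ℝ (⊤:ℕ∞) f) (η K y : ℝ) (hy : f y ≠ 0) :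
    deriv (fun u => K * f u ^ η) y = K * (deriv f y * η * f y ^ (η - 1)) := by
  exact (((hf.differentiable topNeZero y).hasDerivAt.rpow_const (Or.inl hy)).const_mul K).deriv

private lemma dD (f : ℝ → ℝ) (hf : ContDiff ℝ (⊤:ℕ∞) f) (η K y : ℝ) (hy : f y ≠ 0) :
    deriv (fun u => K * (deriv f u * η * f u ^ (η - 1))) y
      = K * ((deriv (deriv f) y * η) * f y ^ (η - 1)
          + (deriv f y * η) * (deriv f y * (η - 1) * f y ^ (η - 1 - 1))) := by
  have hf' : Differentiable ℝ (deriv f) :=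
    (contDiff_infty_iff_deriv.mp hf).2.differentiable topNeZero
  have h1 : HasDerivAt (fun u => deriv f u * η) (deriv (deriv f) y * η) y :=
    (hf' y).hasDerivAt.mul_const η
  have h2 : HasDerivAt (fun u => f u ^ (η - 1)) (deriv f y * (η - 1) * f y ^ (η - 1 - 1)) y :=
    (hf.differentiable topNeZero y).hasDerivAt.rpow_const (Or.inl hy)
  exact ((h1.mul h2).const_mul K).deriv

private lemma HJB_alg (γ ρ η a w B C L ψy ψyy : ℝ)
    (hγ0 : γ ≠ 0) (h1γ : 1 - γ ≠ 0) (ha : 0 < a) (hw : 0 < w)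
    (hQ0 : γ + (1 - γ) * ρ^2 ≠ 0) (hη : η = γ / (γ + (1 - γ) * ρ^2)) :
    w ^ (1 - γ) / (1 - γ) * (η * a ^ (η - 1) *
      (-((1/2) * B^2 * ψyy + (C + ((1 - γ)/γ) * ρ * B * L) * ψy
          + ((1 - γ)/(η * γ)) * (1/2) * L^2 * a)))
    + (1/2) * B^2 * (w ^ (1 - γ) / (1 - γ) * ((ψyy * η) * a ^ (η - 1)
          + (ψy * η) * (ψy * (η - 1) * a ^ (η - 1 - 1))))
    + C * (w ^ (1 - γ) / (1 - γ) * (ψy * η * a ^ (η - 1)))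
    - (ρ * B * (w ^ (-γ) * (ψy * η * a ^ (η - 1))) + L * (w ^ (-γ) * a ^ η))^2
        / (2 * (-(γ * w ^ (-γ - 1) * a ^ η))) = 0 := by
  have hη0 : η ≠ 0 := by rw [hη]; exact div_ne_zero hγ0 hQ0
  have h1 : a ^ (η - 1) = a ^ η / a := by
    rw [Real.rpow_sub ha, Real.rpow_one]
  have h2 : a ^ (η - 1 - 1) = a ^ η / (a * a) := by
    rw [show η - 1 - 1 = η - 2 by ring, Real.rpow_sub ha,
      show (2:ℝ) = ((2:ℕ):ℝ) by norm_num, Real.rpow_natCast]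
    ring_nf
  have h3 : w ^ (1 - γ) = w * w ^ (-γ) := by
    rw [show (1:ℝ) - γ = 1 + -γ by ring, Real.rpow_add hw, Real.rpow_one]
  have h4 : w ^ (-γ - 1) = w ^ (-γ) / w := by
    rw [Real.rpow_sub hw, Real.rpow_one]
  rw [h1, h2, h3, h4]
  have hP : (0:ℝ) < a ^ η := Real.rpow_pos_of_pos ha η
  have hW : (0:ℝ) < w ^ (-γ) := Real.rpow_pos_of_pos hw (-γ)
  set P := a ^ η with hPdef
  set W := w ^ (-γ) with hWdef
  subst hη
  field_simp
  ring

private lemma master (T γ ρ η : ℝ) (c β lam : ℝ → ℝ) (ψ : ℝ → ℝ → ℝ) (hT : 0 < T)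
    (hψsmooth : ContDiffOn ℝ (⊤ : ℕ∞) (fun p : ℝ × ℝ => ψ p.1 p.2)
      (Set.Icc 0 T ×ˢ (Set.univ : Set ℝ)))
    (hψpos : ∀ t ∈ Set.Icc (0:ℝ) T, ∀ y : ℝ, 0 < ψ t y)
    (hψpde : ∀ t ∈ Set.Icc (0:ℝ) T, ∀ y : ℝ,
      pT2 ψ t y + (1/2) * (β y)^2 * pY2 (pY2 ψ) t y
        + (c y + ((1 - γ)/γ) * ρ * β y * lam y) * pY2 ψ t y
        + ((1 - γ)/(η * γ)) * (1/2) * (lam y)^2 * ψ t y = 0)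
    (y t : ℝ) (ht : t ∈ Set.Ico (0:ℝ) T) :
    deriv (fun s => ψ s y ^ η) t
      = η * ψ t y ^ (η - 1) * (-((1/2) * (β y)^2 * pY2 (pY2 ψ) t y
          + (c y + ((1 - γ)/γ) * ρ * β y * lam y) * pY2 ψ t y
          + ((1 - γ)/(η * γ)) * (1/2) * (lam y)^2 * ψ t y)) := by
  have htI : t ∈ Icc (0:ℝ) T := Ico_subset_Icc_self ht
  have ha : 0 < ψ t y := hψpos t htI y
  have hpde' : pT2 ψ t y = -((1/2) * (β y)^2 * pY2 (pY2 ψ) t y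
      + (c y + ((1 - γ)/γ) * ρ * β y * lam y) * pY2 ψ t y
      + ((1 - γ)/(η * γ)) * (1/2) * (lam y)^2 * ψ t y) := by
    have := hψpde t htI y; linarith
  rcases ht.1.eq_or_lt with h0 | h0
  · -- boundary case t = 0
    subst h0
    have h0T : (0:ℝ) ∈ Icc (0:ℝ) T := left_mem_Icc.2 hT.le
    set Ψf : ℝ × ℝ → ℝ := fun p : ℝ × ℝ => ψ p.1 p.2 with hΨfdef
    set S : Set (ℝ × ℝ) := Icc (0:ℝ) T ×ˢ (univ : Set ℝ) with hSdef
    have hUD : UniqueDiffOn ℝ S := (uniqueDiffOn_Icc hT).prod uniqueDiffOn_univ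
    have hmemS : ∀ t' ∈ Icc (0:ℝ) T, ∀ u : ℝ, ((t':ℝ), u) ∈ S := fun t' ht' u => ⟨ht', mem_univ u⟩
    have hF' : ContDiffOn ℝ (⊤:ℕ∞) (fderivWithin ℝ Ψf S) S := hψsmooth.fderivWithin hUD addOneLeTop
    set F : ℝ × ℝ → ℝ := fun p => fderivWithin ℝ Ψf S p ((0:ℝ), (1:ℝ)) with hFdef
    have hFc : ContDiffOn ℝ (⊤:ℕ∞) F S := hF'.clm_apply contDiffOn_const
    have hID1 : ∀ t' ∈ Icc (0:ℝ) T, ∀ u : ℝ, HasDerivAt (fun u' => ψ t' u') (F (t', u)) u := by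
      intro t' ht' u
      have hΨd : HasFDerivWithinAt Ψf (fderivWithin ℝ Ψf S (t', u)) S (t', u) :=
        (hψsmooth.differentiableOn topNeZero (t', u) (hmemS t' ht' u)).hasFDerivWithinAt
      have hι : HasDerivWithinAt (fun u' : ℝ => ((t' : ℝ), u')) (((0:ℝ), (1:ℝ))) univ u :=
        ((hasDerivAt_const u t').prodMk (hasDerivAt_id u)).hasDerivWithinAt
      have hcomp := HasFDerivWithinAt.comp_hasDerivWithinAt u hΨd hι (fun u' _ => hmemS t' ht' u')
      rw [hasDerivWithinAt_univ] at hcomp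
      exact hcomp
    have hpy2F : ∀ t' ∈ Icc (0:ℝ) T, ∀ u : ℝ, pY2 ψ t' u = F (t', u) :=
      fun t' ht' u => (hID1 t' ht' u).deriv
    have hF2' : ContDiffOn ℝ (⊤:ℕ∞) (fderivWithin ℝ F S) S := hFc.fderivWithin hUD addOneLeTop
    set F2 : ℝ × ℝ → ℝ := fun p => fderivWithin ℝ F S p ((0:ℝ), (1:ℝ)) with hF2def
    have hF2c : ContinuousOn F2 S := (hF2'.clm_apply contDiffOn_const).continuousOn
    have hID2 : ∀ t' ∈ Icc (0:ℝ) T, ∀ u : ℝ, HasDerivAt (fun u' => F (t', u')) (F2 (t', u)) u := by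
      intro t' ht' u
      have hFd : HasFDerivWithinAt F (fderivWithin ℝ F S (t', u)) S (t', u) :=
        (hFc.differentiableOn topNeZero (t', u) (hmemS t' ht' u)).hasFDerivWithinAt
      have hι : HasDerivWithinAt (fun u' : ℝ => ((t' : ℝ), u')) (((0:ℝ), (1:ℝ))) univ u :=
        ((hasDerivAt_const u t').prodMk (hasDerivAt_id u)).hasDerivWithinAt
      have hcomp := HasFDerivWithinAt.comp_hasDerivWithinAt u hFd hι (fun u' _ => hmemS t' ht' u')
      rw [hasDerivWithinAt_univ] at hcomp
      exact hcomp
    have hpy22F : ∀ t' ∈ Icc (0:ℝ) T, ∀ u : ℝ, pY2 (pY2 ψ) t' u = F2 (t', u) := by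
      intro t' ht' u
      have heq : (fun u' => pY2 ψ t' u') = fun u' => F (t', u') :=
        funext fun u' => hpy2F t' ht' u'
      show deriv (fun u' => pY2 ψ t' u') u = _
      rw [heq]
      exact (hID2 t' ht' u).deriv
    have hgC : ContDiffOn ℝ (⊤:ℕ∞) (fun s => ψ s y) (Icc (0:ℝ) T) :=
      hψsmooth.comp ((contDiff_id.prodMk contDiff_const).contDiffOn) (fun s hs => hmemS s hs y)
    set G : ℝ → ℝ := fun t' => derivWithin (fun s => ψ s y) (Icc (0:ℝ) T) t'
        + ((1/2) * (β y)^2 * F2 (t', y) + (c y + ((1 - γ)/γ) * ρ * β y * lam y) * F (t', y)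
            + ((1 - γ)/(η * γ)) * (1/2) * (lam y)^2 * ψ t' y) with hGdef
    have hline : ContinuousOn (fun t' : ℝ => ((t' : ℝ), y)) (Icc (0:ℝ) T) :=
      (continuous_id.prodMk continuous_const).continuousOn
    have hmapsto : MapsTo (fun t' : ℝ => ((t' : ℝ), y)) (Icc (0:ℝ) T) S :=
      fun t' ht' => hmemS t' ht' y
    have hGc : ContinuousOn G (Icc (0:ℝ) T) := by
      apply ContinuousOn.add
      · exact hgC.continuousOn_derivWithin (uniqueDiffOn_Icc hT) oneLeTop
      · apply ContinuousOn.add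
        apply ContinuousOn.add
        · exact continuousOn_const.mul (hF2c.comp hline hmapsto)
        · exact continuousOn_const.mul ((hFc.continuousOn).comp hline hmapsto)
        · exact continuousOn_const.mul (hgC.continuousOn)
    have hGzero : ∀ t' ∈ Ioo (0:ℝ) T, G t' = 0 := by
      intro t' ht'
      have htI' : t' ∈ Icc (0:ℝ) T := Ioo_subset_Icc_self ht'
      have hd : derivWithin (fun s => ψ s y) (Icc (0:ℝ) T) t' = deriv (fun s => ψ s y) t' :=
        derivWithin_of_mem_nhds (Icc_mem_nhds ht'.1 ht'.2)
      have hpde := hψpde t' htI' y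
      have hp1 : pT2 ψ t' y = deriv (fun s => ψ s y) t' := rfl
      rw [hp1, hpy2F t' htI' y, hpy22F t' htI' y] at hpde
      simp only [hGdef, hd]
      linarith
    have hG0 : G 0 = 0 := by
      have hne : (𝓝[Ioo (0:ℝ) T] (0:ℝ)).NeBot := by
        rw [← mem_closure_iff_nhdsWithin_neBot, closure_Ioo hT.ne]
        exact h0T
      have h1 : Tendsto G (𝓝[Ioo (0:ℝ) T] 0) (𝓝 (G 0)) :=
        (hGc 0 h0T).mono Ioo_subset_Icc_self
      have h2 : Tendsto G (𝓝[Ioo (0:ℝ) T] 0) (𝓝 0) := by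
        refine tendsto_const_nhds.congr' ?_
        filter_upwards [self_mem_nhdsWithin] with x hx
        exact (hGzero x hx).symm
      exact tendsto_nhds_unique h1 h2
    set d := derivWithin (fun s => ψ s y) (Icc (0:ℝ) T) 0 with hddef
    have hgW : HasDerivWithinAt (fun s => ψ s y) d (Ici (0:ℝ)) 0 := by
      have hd := (hgC.differentiableOn topNeZero 0 h0T).hasDerivWithinAt
      apply hd.mono_of_mem_nhdsWithin
      rw [← nhdsWithin_Icc_eq_nhdsGE hT]
      exact self_mem_nhdsWithin
    by_cases hdiff : DifferentiableAt ℝ (fun s => ψ s y) 0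
    · have hg : HasDerivAt (fun s => ψ s y) (pT2 ψ 0 y) 0 := hdiff.hasDerivAt
      rw [(hg.rpow_const (Or.inl ha.ne')).deriv, hpde']
      ring
    · have hX : pT2 ψ 0 y = 0 := deriv_zero_of_not_differentiableAt hdiff
      have hSp0 : (1/2) * (β y)^2 * pY2 (pY2 ψ) 0 y
          + (c y + ((1 - γ)/γ) * ρ * β y * lam y) * pY2 ψ 0 y
          + ((1 - γ)/(η * γ)) * (1/2) * (lam y)^2 * ψ 0 y = 0 := by
        rw [hX] at hpde'; linarith [hpde']
      have hG0' : G 0 = d + ((1/2) * (β y)^2 * pY2 (pY2 ψ) 0 y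
          + (c y + ((1 - γ)/γ) * ρ * β y * lam y) * pY2 ψ 0 y
          + ((1 - γ)/(η * γ)) * (1/2) * (lam y)^2 * ψ 0 y) := by
        simp only [hGdef, hpy2F 0 h0T y, hpy22F 0 h0T y, hddef]
      have hd0 : d = 0 := by rw [hG0, hSp0] at hG0'; linarith
      by_cases hdiff2 : DifferentiableAt ℝ (fun s => ψ s y ^ η) 0
      · have hhW : HasDerivWithinAt (fun s => ψ s y ^ η) (d * η * ψ 0 y ^ (η - 1))
            (Ici (0:ℝ)) 0 := hgW.rpow_const (Or.inl ha.ne')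
        have h1 := (hdiff2.hasDerivAt.hasDerivWithinAt (s := Ici (0:ℝ))).derivWithin
          (uniqueDiffOn_Ici 0 0 (Set.mem_Ici.2 le_rfl))
        have h2 := hhW.derivWithin (uniqueDiffOn_Ici 0 0 (Set.mem_Ici.2 le_rfl))
        rw [← h1, h2, hd0, hSp0]
        ring
      · rw [deriv_zero_of_not_differentiableAt hdiff2, hSp0]
        ring
  · -- interior case
    have hS : (Icc (0:ℝ) T ×ˢ (univ : Set ℝ)) ∈ 𝓝 ((t:ℝ), y) :=
      prod_mem_nhds (Icc_mem_nhds h0 ht.2) univ_mem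
    have hΨat : ContDiffAt ℝ (⊤:ℕ∞) (fun p : ℝ × ℝ => ψ p.1 p.2) (t, y) :=
      hψsmooth.contDiffAt hS
    have hgd : DifferentiableAt ℝ (fun s => ψ s y) t :=
      (hΨat.differentiableAt topNeZero).comp t (f := fun s : ℝ => (s, y)) (differentiableAt_id.prodMk (differentiableAt_const y))
    have hg : HasDerivAt (fun s => ψ s y) (pT2 ψ t y) t := hgd.hasDerivAt
    rw [(hg.rpow_const (Or.inl ha.ne')).deriv, hpde']
    ring

/-- The distortion transformation: if `ψ > 0` solves the linear Cauchy problem, then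
`V = (w^{1-γ}/(1-γ)) ψ^η` with `η = γ/(γ+(1-γ)ρ²)` is strictly concave in wealth and
solves the nonlinear stochastic-volatility Merton HJB equation; if moreover `ψ(T,·) = 1`
then `V(T, y, w) = w^{1-γ}/(1-γ)`. -/
theorem distortion_transformation_solves_HJB
    (γ ρ η T : ℝ) (hγ : 0 < γ) (hγ1 : γ ≠ 1) (hρ : ρ ∈ Set.Ioo (-1 : ℝ) 1)
    (hη : η = γ / (γ + (1 - γ) * ρ^2))
    (μ σ c β lam : ℝ → ℝ)
    (hμ : ContDiff ℝ (⊤ : ℕ∞) μ) (hσ : ContDiff ℝ (⊤ : ℕ∞) σ)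
    (hc : ContDiff ℝ (⊤ : ℕ∞) c) (hβ : ContDiff ℝ (⊤ : ℕ∞) β)
    (hσpos : ∀ y, 0 < σ y)
    (hlam : ∀ y, lam y = μ y / σ y)
    (ψ : ℝ → ℝ → ℝ)
    (hψsmooth : ContDiffOn ℝ (⊤ : ℕ∞) (fun p : ℝ × ℝ => ψ p.1 p.2)
      (Set.Icc 0 T ×ˢ (Set.univ : Set ℝ)))
    (hψpos : ∀ t ∈ Set.Icc (0:ℝ) T, ∀ y : ℝ, 0 < ψ t y)
    (hψpde : ∀ t ∈ Set.Icc (0:ℝ) T, ∀ y : ℝ,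
      pT2 ψ t y + (1/2) * (β y)^2 * pY2 (pY2 ψ) t y
        + (c y + ((1 - γ)/γ) * ρ * β y * lam y) * pY2 ψ t y
        + ((1 - γ)/(η * γ)) * (1/2) * (lam y)^2 * ψ t y = 0)
    (V : ℝ → ℝ → ℝ → ℝ)
    (hV : ∀ t y w, V t y w = w ^ (1 - γ) / (1 - γ) * ψ t y ^ η) :
    (0 < γ + (1 - γ) * ρ^2) ∧
    (∀ t ∈ Set.Icc (0:ℝ) T, ∀ y : ℝ, ∀ w > (0:ℝ), pW (pW V) t y w < 0) ∧
    (∀ t ∈ Set.Ico (0:ℝ) T, ∀ y : ℝ, ∀ w > (0:ℝ),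
      pT V t y w + (1/2) * (β y)^2 * pY (pY V) t y w + c y * pY V t y w
        - (ρ * β y * pY (pW V) t y w + lam y * pW V t y w)^2
            / (2 * pW (pW V) t y w) = 0) ∧
    ((∀ y : ℝ, ψ T y = 1) →
      ∀ y : ℝ, ∀ w > (0:ℝ), V T y w = w ^ (1 - γ) / (1 - γ)) := by
  have hγ0 : γ ≠ 0 := ne_of_gt hγ
  have h1γ : (1:ℝ) - γ ≠ 0 := sub_ne_zero.2 fun h => hγ1 h.symm
  have hρ1 : ρ^2 < 1 := by nlinarith [hρ.1, hρ.2]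
  have hQpos : 0 < γ + (1 - γ) * ρ^2 := by nlinarith [sq_nonneg ρ]
  have hQ0 : γ + (1 - γ) * ρ^2 ≠ 0 := ne_of_gt hQpos
  have hV' : V = fun t y w => w ^ (1 - γ) / (1 - γ) * ψ t y ^ η := by
    funext t y w; exact hV t y w
  subst hV'
  -- slice smoothness in y
  have hslice : ∀ t ∈ Icc (0:ℝ) T, ContDiff ℝ (⊤:ℕ∞) (fun u => ψ t u) := by
    intro t ht
    rw [← contDiffOn_univ]
    exact hψsmooth.comp ((contDiff_const.prodMk contDiff_id).contDiffOn)
      (fun u _ => ⟨ht, mem_univ u⟩)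
  -- first w-derivative
  have hpW : ∀ (t u w : ℝ), 0 < w →
      pW (fun t y w => w ^ (1 - γ) / (1 - γ) * ψ t y ^ η) t u w
        = w ^ (-γ) * ψ t u ^ η := by
    intro t u w hw
    exact dA γ _ w h1γ hw
  -- second w-derivative
  have hpWW : ∀ (t y w : ℝ), 0 < w →
      pW (pW (fun t y w => w ^ (1 - γ) / (1 - γ) * ψ t y ^ η)) t y w
        = -(γ * w ^ (-γ - 1) * ψ t y ^ η) := by
    intro t y w hw
    show deriv (fun v => pW (fun t y w => w ^ (1 - γ) / (1 - γ) * ψ t y ^ η) t y v) w = _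
    have he : (fun v => pW (fun t y w => w ^ (1 - γ) / (1 - γ) * ψ t y ^ η) t y v)
        =ᶠ[𝓝 w] (fun v => v ^ (-γ) * ψ t y ^ η) := by
      filter_upwards [Ioi_mem_nhds hw] with v hv
      exact hpW t y v hv
    rw [he.deriv_eq]
    exact dB γ _ w hw
  -- y-derivative of V
  have hpYV : ∀ t ∈ Icc (0:ℝ) T, ∀ (y w : ℝ),
      pY (fun t y w => w ^ (1 - γ) / (1 - γ) * ψ t y ^ η) t y w
        = w ^ (1 - γ) / (1 - γ) * (pY2 ψ t y * η * ψ t y ^ (η - 1)) := by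
    intro t ht y w
    exact dC (fun u => ψ t u) (hslice t ht) η _ y (hψpos t ht y).ne'
  -- second y-derivative of V
  have hpYY : ∀ t ∈ Icc (0:ℝ) T, ∀ (y w : ℝ),
      pY (pY (fun t y w => w ^ (1 - γ) / (1 - γ) * ψ t y ^ η)) t y w
        = w ^ (1 - γ) / (1 - γ) * ((pY2 (pY2 ψ) t y * η) * ψ t y ^ (η - 1)
            + (pY2 ψ t y * η) * (pY2 ψ t y * (η - 1) * ψ t y ^ (η - 1 - 1))) := by
    intro t ht y w
    show deriv (fun u => pY (fun t y w => w ^ (1 - γ) / (1 - γ) * ψ t y ^ η) t u w) y = _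
    have he : (fun u => pY (fun t y w => w ^ (1 - γ) / (1 - γ) * ψ t y ^ η) t u w)
        = fun u => w ^ (1 - γ) / (1 - γ)
            * (deriv (fun u' => ψ t u') u * η * ψ t u ^ (η - 1)) :=
      funext fun u => hpYV t ht u w
    rw [he]
    exact dD (fun u => ψ t u) (hslice t ht) η _ y (hψpos t ht y).ne'
  -- mixed derivative
  have hpYW : ∀ t ∈ Icc (0:ℝ) T, ∀ (y w : ℝ), 0 < w →
      pY (pW (fun t y w => w ^ (1 - γ) / (1 - γ) * ψ t y ^ η)) t y w
        = w ^ (-γ) * (pY2 ψ t y * η * ψ t y ^ (η - 1)) := by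
    intro t ht y w hw
    show deriv (fun u => pW (fun t y w => w ^ (1 - γ) / (1 - γ) * ψ t y ^ η) t u w) y = _
    have he : (fun u => pW (fun t y w => w ^ (1 - γ) / (1 - γ) * ψ t y ^ η) t u w)
        = fun u => w ^ (-γ) * ψ t u ^ η := funext fun u => hpW t u w hw
    rw [he]
    exact dC (fun u => ψ t u) (hslice t ht) η _ y (hψpos t ht y).ne'
  refine ⟨hQpos, ?_, ?_, ?_⟩
  · -- concavity
    intro t ht y w hw
    rw [hpWW t y w hw]
    have := mul_pos (mul_pos hγ (Real.rpow_pos_of_pos hw (-γ - 1)))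
      (Real.rpow_pos_of_pos (hψpos t ht y) η)
    linarith
  · -- HJB equation
    intro t ht y w hw
    have htI : t ∈ Icc (0:ℝ) T := Ico_subset_Icc_self ht
    have hT : 0 < T := lt_of_le_of_lt ht.1 ht.2
    have ha : 0 < ψ t y := hψpos t htI y
    have hmas := master T γ ρ η c β lam ψ hT hψsmooth hψpos hψpde y t ht
    have hpT : pT (fun t y w => w ^ (1 - γ) / (1 - γ) * ψ t y ^ η) t y w
        = w ^ (1 - γ) / (1 - γ) * (η * ψ t y ^ (η - 1)
            * (-((1/2) * (β y)^2 * pY2 (pY2 ψ) t y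
              + (c y + ((1 - γ)/γ) * ρ * β y * lam y) * pY2 ψ t y
              + ((1 - γ)/(η * γ)) * (1/2) * (lam y)^2 * ψ t y))) := by
      show deriv (fun s => w ^ (1 - γ) / (1 - γ) * ψ s y ^ η) t = _
      rw [deriv_const_mul_field, hmas]
    rw [hpT, hpYY t htI y w, hpYV t htI y w, hpYW t htI y w hw, hpW t y w hw, hpWW t y w hw]
    have halg := HJB_alg γ ρ η (ψ t y) w (β y) (c y) (lam y) (pY2 ψ t y) (pY2 (pY2 ψ) t y)
      hγ0 h1γ ha hw hQ0 hη
    linarith [halg]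
  · -- terminal condition
    intro hψT y w hw
    simp only [hψT y, Real.one_rpow, mul_one]
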